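/- Let ν be a compactly supported probability measure on ℝ with barycenter ρ, and suppose the Div-Curl identity ⟨ν; |k−ρ|⟩ · ( G(ρ) − ⟨ν; G(k)⟩ ) = 0 holds, where G is strictly convex. Then ν = δ_ρ. -/

import Mathlib

open MeasureTheory

lemma integrable_of_null_compl {ν : Measure ℝ} [IsProbabilityMeasure ν]
    {K : Set ℝ} (hK : IsCompact K) (hsupp : ν Kᶜ = 0) {f : ℝ → ℝ}
    (hf : Continuous f) : Integrable f ν := by
  obtain ⟨C, hC⟩ := hK.exists_bound_of_continuousOn hf.continuousOn
  have hmem : ∀ᵐ x ∂ν, x ∈ K := by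
    rw [ae_iff]; exact hsupp
  exact (integrable_const C).mono' hf.aestronglyMeasurable
    (hmem.mono fun x hx => by simpa using hC x hx)

lemma eq_dirac_of_ae_eq {ν : Measure ℝ} [IsProbabilityMeasure ν] {ρ : ℝ}
    (h : ∀ᵐ x ∂ν, x = ρ) : ν = Measure.dirac ρ := by
  have h0 : ν {ρ}ᶜ = 0 := by
    rw [ae_iff] at h; simpa [Set.compl_def] using h
  ext s hs
  rw [Measure.dirac_apply' _ hs]
  by_cases hρs : ρ ∈ s
  · have : ν sᶜ = 0 := measure_mono_null
      (Set.compl_subset_compl.mpr (Set.singleton_subset_iff.mpr hρs)) h0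
    have := prob_compl_eq_zero_iff (MeasurableSet.compl_iff.mp hs.compl) |>.mp this
    simp [this, Set.indicator_of_mem hρs]
  · have : ν s = 0 := measure_mono_null
      (fun x hx (hxρ : x ∈ ({ρ} : Set ℝ)) => hρs (by rwa [Set.mem_singleton_iff.mp hxρ] at hx)) h0
    simp [this, Set.indicator_of_notMem hρs]

/-- if a compactly supported probability measure `ν` with
barycenter `ρ` satisfies the Div-Curl identity
`⟨ν; |k−ρ|⟩ · (G(ρ) − ⟨ν; G⟩) = 0` with `G` strictly convex, then `ν = δ_ρ`. -/
theorem divcurl_identity_implies_dirac (ν : Measure ℝ)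
    [IsProbabilityMeasure ν] (K : Set ℝ) (hK : IsCompact K) (hsupp : ν Kᶜ = 0)
    (G : ℝ → ℝ) (hG : ContDiff ℝ 2 G) (hconv : StrictConvexOn ℝ Set.univ G)
    (ρ : ℝ) (hρ : ρ = ∫ k : ℝ, k ∂ν)
    (hfac : (∫ k : ℝ, |k - ρ| ∂ν) * (G ρ - ∫ k : ℝ, G k ∂ν) = 0) :
    ν = Measure.dirac ρ := by
  have hid : Integrable (fun k : ℝ => k) ν :=
    integrable_of_null_compl hK hsupp continuous_id
  have habs : Integrable (fun k : ℝ => |k - ρ|) ν :=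
    integrable_of_null_compl hK hsupp (by continuity)
  have hGi : Integrable G ν := integrable_of_null_compl hK hsupp hG.continuous
  rcases mul_eq_zero.mp hfac with h | h
  · -- ∫ |k - ρ| = 0
    have hnn : 0 ≤ᵐ[ν] fun k => |k - ρ| := Filter.Eventually.of_forall fun k => abs_nonneg _
    have := (integral_eq_zero_iff_of_nonneg_ae hnn habs).mp h
    exact eq_dirac_of_ae_eq (this.mono fun x hx => by
      have : |x - ρ| = 0 := hx
      linarith [abs_eq_zero.mp this])
  · -- Jensen strict
    have hGρ : G ρ = ∫ k, G k ∂ν := by linarith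
    have := hconv.ae_eq_const_or_map_average_lt hG.continuous.continuousOn isClosed_univ
      (Filter.Eventually.of_forall fun x => Set.mem_univ x) hid hGi
    rcases this with h' | h'
    · refine eq_dirac_of_ae_eq (h'.mono fun x hx => ?_)
      simpa [Function.const, average_eq_integral, ← hρ] using hx
    · exfalso
      rw [average_eq_integral, average_eq_integral, ← hρ] at h'
      linarith
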